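/- Let m₀ ∈ ℂ[Y] be nonzero and let y ∈ ℂ be a root of m₀ of multiplicity μ ≥ 1. Let w ∈ ℂ[Y] be a polynomial divisible by g := gcd(m₀, m₀′). Then g has y as a root of multiplicity exactly μ − 1, and (w/g)(y) / (m₀′/g)(y) = w^{(μ−1)}(y) / m₀^{(μ)}(y), where both denominators are nonzero. -/
import Mathlib


open Polynomial

attribute [local instance] Classical.propDecidable

open Finset in
lemma eval_iterate_derivative_pow_mul (k : ℕ) (y : ℂ) (c : Polynomial ℂ) :
    eval y (derivative^[k] ((X - C y) ^ k * c)) = k.factorial * eval y c := by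
  rw [iterate_derivative_mul, eval_finset_sum,
    sum_eq_single_of_mem 0 (mem_range.mpr k.succ_pos)]
  · rw [k.choose_zero_right, one_smul, eval_mul, k.sub_zero,
      iterate_derivative_X_sub_pow_self, eval_natCast, Function.iterate_zero_apply]
  · intro b hb hb0
    rw [iterate_derivative_X_sub_pow, eval_smul, eval_mul, eval_smul, eval_pow,
      Nat.sub_sub_self (mem_range_succ_iff.mp hb), eval_sub, eval_X, eval_C, sub_self,
      zero_pow hb0, smul_zero, zero_mul, smul_zero]

/-- Let `m₀ ∈ ℂ[Y]` be nonzero, `y` a root of `m₀` of multiplicity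
`μ ≥ 1`, and `w ∈ ℂ[Y]` divisible by `g = gcd(m₀, m₀′)`.  Then `g` has `y` as a root of
multiplicity exactly `μ - 1`, the values `m₀^{(μ)}(y)` and `(m₀′/g)(y)` are nonzero, and
`(w/g)(y) / (m₀′/g)(y) = w^{(μ-1)}(y) / m₀^{(μ)}(y)` (stated with denominators
cleared). -/
theorem stmt11 (m₀ w : Polynomial ℂ) (hm : m₀ ≠ 0) (y : ℂ)
    (μ : ℕ) (hμ : μ = rootMultiplicity y m₀) (hμ1 : 1 ≤ μ)
    (g : Polynomial ℂ) (hg : g = EuclideanDomain.gcd m₀ (derivative m₀))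
    (hw : g ∣ w) :
    rootMultiplicity y g = μ - 1 ∧
    eval y (derivative^[μ] m₀) ≠ 0 ∧
    eval y (derivative m₀ / g) ≠ 0 ∧
    eval y (w / g) * eval y (derivative^[μ] m₀) =
      eval y (derivative^[μ - 1] w) * eval y (derivative m₀ / g) := by
  set k := μ - 1 with hk
  have hμk : μ = k + 1 := (Nat.sub_add_cancel hμ1).symm
  have hXy : (X - C y : Polynomial ℂ) ≠ 0 := X_sub_C_ne_zero y
  obtain ⟨q, hfact, hq⟩ : ∃ q, (X - C y) ^ μ * q = m₀ ∧ eval y q ≠ 0 := by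
    subst hμ
    exact ⟨_, pow_mul_divByMonic_rootMultiplicity_eq m₀ y,
      eval_divByMonic_pow_rootMultiplicity_ne_zero y hm⟩
  -- second derivative value
  have h2 : eval y (derivative^[μ] m₀) = μ.factorial * eval y q := by
    conv_lhs => rw [← hfact]
    exact eval_iterate_derivative_pow_mul μ y q
  have h2ne : eval y (derivative^[μ] m₀) ≠ 0 := by
    rw [h2]
    exact mul_ne_zero (Nat.cast_ne_zero.mpr μ.factorial_ne_zero) hq
  -- factor the derivative
  set r : Polynomial ℂ := C (μ : ℂ) * q + (X - C y) * derivative q with hr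
  have hder : derivative m₀ = (X - C y) ^ k * r := by
    conv_lhs => rw [← hfact]
    rw [derivative_mul, derivative_pow, derivative_sub, derivative_X, derivative_C, sub_zero,
      mul_one, hr, hμk]
    simp [pow_succ]
    ring
  have hrey : eval y r ≠ 0 := by
    have : eval y r = (μ : ℂ) * eval y q := by simp [hr]
    rw [this]
    exact mul_ne_zero (Nat.cast_ne_zero.mpr (by omega)) hq
  have hg0 : g ≠ 0 := by
    rw [hg]
    intro h
    exact hm (EuclideanDomain.gcd_eq_zero_iff.mp h).1
  have hgdvd' : g ∣ derivative m₀ := hg ▸ EuclideanDomain.gcd_dvd_right _ _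
  -- root multiplicity of g
  have hmultg : rootMultiplicity y g = k := by
    have hle : rootMultiplicity y g ≤ k := by
      by_contra hlt
      push_neg at hlt
      have h1 : (X - C y) ^ (k + 1) ∣ g :=
        (pow_dvd_pow _ hlt).trans (g.pow_rootMultiplicity_dvd y)
      have hdvd : (X - C y) ^ (k + 1) ∣ (X - C y) ^ k * r := hder ▸ h1.trans hgdvd'
      obtain ⟨u, hu⟩ := hdvd
      rw [pow_succ, mul_assoc] at hu
      have : (X - C y) ∣ r := ⟨u, mul_left_cancel₀ (pow_ne_zero _ hXy) hu⟩
      exact hrey (dvd_iff_isRoot.mp this)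
    have hge : k ≤ rootMultiplicity y g := by
      rw [le_rootMultiplicity_iff hg0, hg]
      refine EuclideanDomain.dvd_gcd ?_ ?_
      · exact ((pow_dvd_pow _ (by omega : k ≤ μ)).trans ⟨q, hfact.symm⟩)
      · exact hder ▸ dvd_mul_right _ _
    omega
  obtain ⟨h, hgfact, hhy⟩ : ∃ h, (X - C y) ^ k * h = g ∧ eval y h ≠ 0 := by
    rw [← hmultg]
    exact ⟨_, pow_mul_divByMonic_rootMultiplicity_eq g y,
      eval_divByMonic_pow_rootMultiplicity_ne_zero y hg0⟩
  have ha_eq : g * (derivative m₀ / g) = derivative m₀ :=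
    EuclideanDomain.mul_div_cancel' hg0 hgdvd'
  have hb_eq : g * (w / g) = w := EuclideanDomain.mul_div_cancel' hg0 hw
  set a := derivative m₀ / g with hadef
  set b := w / g with hbdef
  -- h * a = r
  have hha : h * a = r := by
    apply mul_left_cancel₀ (pow_ne_zero k hXy)
    rw [← mul_assoc, hgfact, ha_eq, hder]
  have hevha : eval y h * eval y a = (μ : ℂ) * eval y q := by
    have := congrArg (eval y) hha
    simp only [eval_mul] at this
    rw [this]
    simp [hr]
  have hane : eval y a ≠ 0 := by
    intro h0
    apply mul_ne_zero (Nat.cast_ne_zero.mpr (by omega : μ ≠ 0)) hq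
    rw [← hevha, h0, mul_zero]
  -- derivative of w
  have h4 : eval y (derivative^[k] w) = k.factorial * (eval y h * eval y b) := by
    conv_lhs => rw [← hb_eq, ← hgfact, mul_assoc]
    rw [eval_iterate_derivative_pow_mul k y (h * b), eval_mul]
  refine ⟨hmultg, h2ne, hane, ?_⟩
  rw [hμk] at hevha
  push_cast at hevha
  rw [h2, h4, hμk]
  push_cast [Nat.factorial_succ]
  linear_combination (-((k.factorial : ℂ) * eval y b)) * hevha
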